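/- Let Z be a {0,1}-valued random variable, Y(0), Y(1) real integrable random variables with Y = Z·Y(1)+(1−Z)·Y(0), and X a random element such that Z ⟂ (Y(0),Y(1)) | X and 0 < e(X) < 1 a.s., where e(X) = P(Z=1|X). Then E[Y(1)] − E[Y(0)] = E[ E[Y | e(X), Z=1] − E[Y | e(X), Z=0] ], where the outer expectation is over the distribution of e(X). -/

import Mathlib

open MeasureTheory ProbabilityTheory

lemma aux_condExp_mul
    {Ω : Type*} [mΩ : MeasurableSpace Ω] [StandardBorelSpace Ω]
    (μ : Measure Ω) [IsProbabilityMeasure μ]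
    {β : Type*} [mβ : MeasurableSpace β]
    {Z : Ω → ℝ} (hZ : Measurable Z) (hZ01 : ∀ ω, Z ω = 0 ∨ Z ω = 1)
    {g : Ω → β} (hg : Measurable g)
    {W : Ω → ℝ} (hWm : AEStronglyMeasurable[mβ.comap g] W μ)
    (hWint : Integrable W μ)
    {mX : MeasurableSpace Ω} (hmXle : mX ≤ mΩ)
    (hindep : CondIndepFun mX hmXle Z g μ) :
    (fun ω => (μ[Z|mX]) ω * (μ[W|mX]) ω) =ᵐ[μ] μ[fun ω => Z ω * W ω|mX] := by
  letI : MeasurableSpace Ω := mΩ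
  have hZbd : ∀ᵐ ω ∂μ, ‖Z ω‖ ≤ 1 := Filter.Eventually.of_forall fun ω => by
    rcases hZ01 ω with h | h <;> simp [h]
  have hZint : Integrable Z μ := by
    have := Integrable.bdd_mul (μ := μ) (integrable_const (1 : ℝ)) (c := 1) hZ.aestronglyMeasurable hZbd
    simpa using this
  have hZWint : Integrable (fun ω => Z ω * W ω) μ :=
    hWint.bdd_mul hZ.aestronglyMeasurable hZbd
  have hqm : AEStronglyMeasurable (μ[Z|mX]) μ :=
    (stronglyMeasurable_condExp.mono hmXle).aestronglyMeasurable
  have hcb : ∀ᵐ ω ∂μ, ‖(μ[Z|mX]) ω‖ ≤ 1 := by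
    have h0 : 0 ≤ᵐ[μ] μ[Z|mX] := condExp_nonneg (Filter.Eventually.of_forall fun ω => by
      rcases hZ01 ω with h | h <;> simp [h])
    have h1 : μ[Z|mX] ≤ᵐ[μ] μ[fun _ => (1:ℝ)|mX] :=
      condExp_mono hZint (integrable_const 1) (Filter.Eventually.of_forall fun ω => by
        rcases hZ01 ω with h | h <;> simp [h])
    rw [condExp_const hmXle] at h1
    filter_upwards [h0, h1] with ω hω0 hω1
    simp only [Pi.zero_apply] at hω0
    rw [Real.norm_eq_abs, abs_le]
    exact ⟨by linarith, hω1⟩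
  set A : Set Ω := Z ⁻¹' {1} with hA_def
  have hA : MeasurableSet A := hZ (measurableSet_singleton 1)
  have hZeq : Z = A.indicator (fun _ => (1:ℝ)) := by
    funext ω
    by_cases hω : ω ∈ A
    · rw [Set.indicator_of_mem hω]
      simpa [hA_def] using hω
    · rw [Set.indicator_of_notMem hω]
      rcases hZ01 ω with h | h
      · exact h
      · exact absurd (by simp [hA_def, h] : ω ∈ A) hω
  have hmul := (condIndepFun_iff_condExp_inter_preimage_eq_mul hZ hg).mp hindep
  refine ae_eq_condExp_of_forall_setIntegral_eq hmXle hZWint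
    (fun s _ _ => (integrable_condExp.bdd_mul hqm hcb).integrableOn)
    (fun s hs hμs => ?_)
    ((stronglyMeasurable_condExp.mul stronglyMeasurable_condExp).aestronglyMeasurable)
  have main : ∀ ⦃V : Ω → ℝ⦄, MemLp V 1 μ → AEStronglyMeasurable[mβ.comap g] V μ →
      ∫ x in s, (μ[Z|mX]) x * (μ[V|mX]) x ∂μ = ∫ x in s, Z x * V x ∂μ := by
    refine MemLp.induction_stronglyMeasurable hg.comap_le ENNReal.one_ne_top
      (fun V => ∫ x in s, (μ[Z|mX]) x * (μ[V|mX]) x ∂μ = ∫ x in s, Z x * V x ∂μ)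
      ?_ ?_ ?_ ?_
    · -- indicator case
      rintro c t ⟨t', ht', rfl⟩ -
      have hkey := hmul {1} t' (measurableSet_singleton 1) ht'
      have htm : MeasurableSet (g ⁻¹' t') := hg ht'
      have hAtm : MeasurableSet (A ∩ g ⁻¹' t') := hA.inter htm
      have hindAt_int : Integrable ((A ∩ g ⁻¹' t').indicator (fun _ => (1:ℝ))) μ :=
        (integrable_const 1).indicator hAtm
      have hindt_int : Integrable ((g ⁻¹' t').indicator (fun _ => c)) μ :=
        (integrable_const c).indicator htm
      -- right-hand side
      have hRfun : (fun x => Z x * (g ⁻¹' t').indicator (fun _ => c) x)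
          = (A ∩ g ⁻¹' t').indicator (fun _ => c) := by
        funext x
        rw [hZeq]
        by_cases h1 : x ∈ A <;> by_cases h2 : x ∈ g ⁻¹' t' <;>
          simp [Set.indicator_apply, h1, h2, Set.mem_inter_iff]
      have hR : ∫ x in s, Z x * (g ⁻¹' t').indicator (fun _ => c) x ∂μ
          = (μ (s ∩ (A ∩ g ⁻¹' t'))).toReal * c := by
        rw [hRfun, setIntegral_indicator hAtm, setIntegral_const, smul_eq_mul, measureReal_def]
      -- left-hand side
      have hcond1 : μ[(g ⁻¹' t').indicator (fun _ => c)|mX]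
          =ᵐ[μ] fun x => c * (μ⟦g ⁻¹' t'|mX⟧) x := by
        have heq : ((g ⁻¹' t').indicator (fun _ => c))
            = c • ((g ⁻¹' t').indicator (fun _ => (1:ℝ))) := by
          funext x; by_cases h : x ∈ g ⁻¹' t' <;> simp [h]
        rw [heq]
        have := condExp_smul (μ := μ) (m := mX) c ((g ⁻¹' t').indicator (fun _ => (1:ℝ)))
        filter_upwards [this] with x hx
        simpa [smul_eq_mul] using hx
      have hZc : μ[Z|mX] = μ⟦A|mX⟧ := by rw [hZeq]
      have hInt : ∫ x in s, (μ[Z|mX]) x * (μ[(g ⁻¹' t').indicator (fun _ => c)|mX]) x ∂μ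
          = ∫ x in s, c * (μ⟦A ∩ g ⁻¹' t'|mX⟧) x ∂μ := by
        refine setIntegral_congr_ae (hmXle s hs) ?_
        filter_upwards [hcond1, hkey] with x h1 h2 _
        rw [hZc, h1, h2]
        ring
      rw [hInt, integral_const_mul, setIntegral_condExp hmXle hindAt_int hs,
        setIntegral_indicator hAtm, setIntegral_const, hR]
      simp [mul_comm, measureReal_def]
    · -- additivity
      intro u v hdisj hu hv hum hvm hPu hPv
      have hui := memLp_one_iff_integrable.mp hu
      have hvi := memLp_one_iff_integrable.mp hv
      have hL : ∫ x in s, (μ[Z|mX]) x * (μ[u + v|mX]) x ∂μ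
          = (∫ x in s, (μ[Z|mX]) x * (μ[u|mX]) x ∂μ)
            + ∫ x in s, (μ[Z|mX]) x * (μ[v|mX]) x ∂μ := by
        rw [← integral_add (integrable_condExp.bdd_mul hqm hcb).integrableOn
          (integrable_condExp.bdd_mul hqm hcb).integrableOn]
        refine setIntegral_congr_ae (hmXle s hs) ?_
        filter_upwards [condExp_add hui hvi mX] with x hx _
        rw [hx]
        simp [mul_add]
      have hR : ∫ x in s, Z x * (u + v) x ∂μ
          = (∫ x in s, Z x * u x ∂μ) + ∫ x in s, Z x * v x ∂μ := by
        rw [← integral_add (hui.bdd_mul hZ.aestronglyMeasurable hZbd).integrableOn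
          (hvi.bdd_mul hZ.aestronglyMeasurable hZbd).integrableOn]
        refine setIntegral_congr_ae (hmXle s hs) ?_
        filter_upwards with x _
        simp [mul_add]
      rw [hL, hR, hPu, hPv]
    · -- closedness
      have hFcont : Continuous fun f : Lp ℝ 1 μ => ∫ x in s, Z x * f x ∂μ := by
        refine (LipschitzWith.of_dist_le_mul (K := 1) fun u v => ?_).continuous
        have hu : Integrable (⇑u) μ := L1.integrable_coeFn u
        have hv : Integrable (⇑v) μ := L1.integrable_coeFn v
        have h1 : (∫ x in s, Z x * u x ∂μ) - ∫ x in s, Z x * v x ∂μ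
            = ∫ x in s, Z x * (u x - v x) ∂μ := by
          rw [← integral_sub (hu.bdd_mul hZ.aestronglyMeasurable hZbd).integrableOn
            (hv.bdd_mul hZ.aestronglyMeasurable hZbd).integrableOn]
          congr 1
          funext x
          ring
        have huvint : Integrable (fun x => Z x * (u x - v x)) μ :=
          (hu.sub hv).bdd_mul hZ.aestronglyMeasurable hZbd
        rw [Real.dist_eq, h1, NNReal.coe_one, one_mul]
        calc |∫ x in s, Z x * (u x - v x) ∂μ|
            ≤ ∫ x in s, |Z x * (u x - v x)| ∂μ := by
              simpa only [Real.norm_eq_abs] using norm_integral_le_integral_norm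
                (μ := μ.restrict s) (f := fun x => Z x * (u x - v x))
          _ ≤ ∫ x, |Z x * (u x - v x)| ∂μ :=
              setIntegral_le_integral huvint.abs
                (Filter.Eventually.of_forall fun x => abs_nonneg _)
          _ ≤ ∫ x, |u x - v x| ∂μ := by
              refine integral_mono_ae huvint.abs (hu.sub hv).abs ?_
              filter_upwards [hZbd] with x hx
              rw [abs_mul]
              exact mul_le_of_le_one_left (abs_nonneg _) (by simpa using hx)
          _ = dist u v := by
              rw [L1.dist_eq_integral_dist]
              exact integral_congr_ae (Filter.Eventually.of_forall fun x => by
                simp [Real.dist_eq])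
      have hGcont : Continuous fun f : Lp ℝ 1 μ =>
          ∫ x in s, (μ[Z|mX]) x * (μ[⇑f|mX]) x ∂μ := by
        refine (LipschitzWith.of_dist_le_mul (K := 1) fun u v => ?_).continuous
        have hu : Integrable (⇑u) μ := L1.integrable_coeFn u
        have hv : Integrable (⇑v) μ := L1.integrable_coeFn v
        have h1 : (∫ x in s, (μ[Z|mX]) x * (μ[⇑u|mX]) x ∂μ)
              - ∫ x in s, (μ[Z|mX]) x * (μ[⇑v|mX]) x ∂μ
            = ∫ x in s, (μ[Z|mX]) x * ((μ[⇑u|mX]) x - (μ[⇑v|mX]) x) ∂μ := by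
          rw [← integral_sub (integrable_condExp.bdd_mul hqm hcb).integrableOn
            (integrable_condExp.bdd_mul hqm hcb).integrableOn]
          congr 1
          funext x
          ring
        have hdiffint : Integrable (fun x => (μ[⇑u|mX]) x - (μ[⇑v|mX]) x) μ :=
          integrable_condExp.sub integrable_condExp
        have hprodint : Integrable
            (fun x => (μ[Z|mX]) x * ((μ[⇑u|mX]) x - (μ[⇑v|mX]) x)) μ :=
          hdiffint.bdd_mul hqm hcb
        rw [Real.dist_eq, h1, NNReal.coe_one, one_mul]
        calc |∫ x in s, (μ[Z|mX]) x * ((μ[⇑u|mX]) x - (μ[⇑v|mX]) x) ∂μ|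
            ≤ ∫ x in s, |(μ[Z|mX]) x * ((μ[⇑u|mX]) x - (μ[⇑v|mX]) x)| ∂μ := by
              simpa only [Real.norm_eq_abs] using norm_integral_le_integral_norm
                (μ := μ.restrict s) (f := fun x => (μ[Z|mX]) x * ((μ[⇑u|mX]) x - (μ[⇑v|mX]) x))
          _ ≤ ∫ x, |(μ[Z|mX]) x * ((μ[⇑u|mX]) x - (μ[⇑v|mX]) x)| ∂μ :=
              setIntegral_le_integral hprodint.abs
                (Filter.Eventually.of_forall fun x => abs_nonneg _)
          _ ≤ ∫ x, |(μ[⇑u|mX]) x - (μ[⇑v|mX]) x| ∂μ := by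
              refine integral_mono_ae hprodint.abs hdiffint.abs ?_
              filter_upwards [hcb] with x hx
              rw [abs_mul]
              exact mul_le_of_le_one_left (abs_nonneg _) (by simpa using hx)
          _ = ∫ x, |(μ[⇑u - ⇑v|mX]) x| ∂μ := by
              refine integral_congr_ae ?_
              filter_upwards [condExp_sub hu hv mX] with x hx
              rw [hx]
              simp
          _ ≤ ∫ x, |(⇑u - ⇑v) x| ∂μ := integral_abs_condExp_le _
          _ = dist u v := by
              rw [L1.dist_eq_integral_dist]
              exact integral_congr_ae (Filter.Eventually.of_forall fun x => by
                simp [Real.dist_eq])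
      exact isClosed_eq (hGcont.comp continuous_subtype_val)
        (hFcont.comp continuous_subtype_val)
    · -- a.e. congruence
      intro u v huv hu hPu
      have h1 : ∫ x in s, (μ[Z|mX]) x * (μ[v|mX]) x ∂μ
          = ∫ x in s, (μ[Z|mX]) x * (μ[u|mX]) x ∂μ := by
        refine setIntegral_congr_ae (hmXle s hs) ?_
        filter_upwards [condExp_congr_ae huv] with x hx _
        rw [hx]
      have h2 : ∫ x in s, Z x * v x ∂μ = ∫ x in s, Z x * u x ∂μ := by
        refine setIntegral_congr_ae (hmXle s hs) ?_
        filter_upwards [huv] with x hx _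
        rw [hx]
      rw [h1, h2, hPu]
  exact main (memLp_one_iff_integrable.mpr hWint) hWm

/-- equation (1) of the paper: under strong ignorability and
positivity, the average causal effect equals the expectation, over the
distribution of the propensity score `e(X)`, of the difference of conditional
mean outcomes among treated and controls at each propensity score value.  Here
`E[Y | e(X), Z=1] = E[ZY | e(X)] / E[Z | e(X)]` and
`E[Y | e(X), Z=0] = E[(1-Z)Y | e(X)] / E[1-Z | e(X)]` since `Z` is binary. -/
theorem ace_eq_subclassification_identity
    {Ω : Type*} [mΩ : MeasurableSpace Ω] [StandardBorelSpace Ω]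
    (μ : Measure Ω) [IsProbabilityMeasure μ]
    {𝒳 : Type*} [MeasurableSpace 𝒳] (X : Ω → 𝒳) (hX : Measurable X)
    (Z : Ω → ℝ) (hZ : Measurable Z) (hZ01 : ∀ ω, Z ω = 0 ∨ Z ω = 1)
    (Y0 Y1 : Ω → ℝ) (hY0 : Measurable Y0) (hY1 : Measurable Y1)
    (hY0int : Integrable Y0 μ) (hY1int : Integrable Y1 μ)
    (Y : Ω → ℝ) (hY : Y = fun ω => Z ω * Y1 ω + (1 - Z ω) * Y0 ω)
    (mX : MeasurableSpace Ω) (hmX : mX = MeasurableSpace.comap X inferInstance)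
    (hmXle : mX ≤ mΩ)
    (hindep : @CondIndepFun Ω mX mΩ _ hmXle ℝ (ℝ × ℝ) _ _ Z (fun ω => (Y0 ω, Y1 ω)) μ _)
    (e : Ω → ℝ) (he : e = μ[Z | mX])
    (hpos : ∀ᵐ ω ∂μ, 0 < e ω ∧ e ω < 1)
    (me : MeasurableSpace Ω) (hme : me = MeasurableSpace.comap e inferInstance)
    (hmele : me ≤ mΩ)
    (hint : Integrable (fun ω =>
      condExp me μ (fun ω' => Z ω' * Y ω') ω / condExp me μ Z ω
        - condExp me μ (fun ω' => (1 - Z ω') * Y ω') ω / condExp me μ (fun ω' => 1 - Z ω') ω) μ) :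
    (∫ ω, Y1 ω ∂μ) - ∫ ω, Y0 ω ∂μ
      = ∫ ω, (condExp me μ (fun ω' => Z ω' * Y ω') ω / condExp me μ Z ω
          - condExp me μ (fun ω' => (1 - Z ω') * Y ω') ω / condExp me μ (fun ω' => 1 - Z ω') ω) ∂μ := by
  letI : MeasurableSpace Ω := mΩ
  have hZbd : ∀ᵐ ω ∂μ, ‖Z ω‖ ≤ 1 := Filter.Eventually.of_forall fun ω => by
    rcases hZ01 ω with h | h <;> simp [h]
  have hZint : Integrable Z μ := by
    have := Integrable.bdd_mul (μ := μ) (integrable_const (1 : ℝ)) (c := 1)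
      hZ.aestronglyMeasurable hZbd
    simpa using this
  set g : Ω → ℝ × ℝ := fun ω => (Y0 ω, Y1 ω) with hg_def
  have hg : Measurable g := hY0.prodMk hY1
  have hgm : Measurable[MeasurableSpace.comap g inferInstance] g :=
    Measurable.of_comap_le le_rfl
  have hY1m : AEStronglyMeasurable[MeasurableSpace.comap g inferInstance] Y1 μ :=
    (measurable_snd.comp hgm).stronglyMeasurable.aestronglyMeasurable
  have hY0m : AEStronglyMeasurable[MeasurableSpace.comap g inferInstance] Y0 μ :=
    (measurable_fst.comp hgm).stronglyMeasurable.aestronglyMeasurable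
  have h1 : μ[fun ω => Z ω * Y1 ω|mX] =ᵐ[μ] fun ω => e ω * (μ[Y1|mX]) ω := by
    have h := (aux_condExp_mul μ hZ hZ01 hg hY1m hY1int hmXle hindep).symm
    rw [← he] at h
    exact h
  have h0 : μ[fun ω => Z ω * Y0 ω|mX] =ᵐ[μ] fun ω => e ω * (μ[Y0|mX]) ω := by
    have h := (aux_condExp_mul μ hZ hZ01 hg hY0m hY0int hmXle hindep).symm
    rw [← he] at h
    exact h
  have heSM : StronglyMeasurable[mX] e := by rw [he]; exact stronglyMeasurable_condExp
  have hmeX : me ≤ mX := by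
    rw [hme]
    exact heSM.measurable.comap_le
  have heMe : StronglyMeasurable[me] e := by
    rw [hme]
    exact (Measurable.of_comap_le le_rfl).stronglyMeasurable
  have heInt : Integrable e μ := by rw [he]; exact integrable_condExp
  have hebd : ∀ᵐ ω ∂μ, ‖e ω‖ ≤ 1 := by
    filter_upwards [hpos] with ω hp
    rw [Real.norm_eq_abs, abs_le]
    exact ⟨by linarith [hp.1], by linarith [hp.2]⟩
  have h1ebd : ∀ᵐ ω ∂μ, ‖1 - e ω‖ ≤ 1 := by
    filter_upwards [hpos] with ω hp
    rw [Real.norm_eq_abs, abs_le]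
    exact ⟨by linarith [hp.2], by linarith [hp.1]⟩
  have hZme : μ[Z|me] =ᵐ[μ] e := by
    have h := (condExp_condExp_of_le (μ := μ) hmeX hmXle (f := Z)).symm
    rw [← he] at h
    refine h.trans ?_
    rw [condExp_of_stronglyMeasurable hmele heMe heInt]
  have hZY1int : Integrable (fun ω => Z ω * Y1 ω) μ :=
    hY1int.bdd_mul hZ.aestronglyMeasurable hZbd
  have hZY0int : Integrable (fun ω => Z ω * Y0 ω) μ :=
    hY0int.bdd_mul hZ.aestronglyMeasurable hZbd
  have hZY1fun : (fun ω => Z ω * Y ω) = fun ω => Z ω * Y1 ω := by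
    funext ω
    rcases hZ01 ω with h | h <;> rw [hY] <;> simp [h]
  have h1ZYfun : (fun ω => (1 - Z ω) * Y ω) = fun ω => Y0 ω - Z ω * Y0 ω := by
    funext ω
    rcases hZ01 ω with h | h <;> rw [hY] <;> simp [h]
  have htreatint : Integrable (fun ω => e ω * (μ[Y1|mX]) ω) μ :=
    integrable_condExp.bdd_mul (heSM.mono hmXle).aestronglyMeasurable hebd
  have htreat : μ[fun ω => Z ω * Y ω|me] =ᵐ[μ] fun ω => e ω * (μ[Y1|me]) ω := by
    rw [hZY1fun]
    have t1 : μ[fun ω => Z ω * Y1 ω|me] =ᵐ[μ] μ[μ[fun ω => Z ω * Y1 ω|mX]|me] :=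
      (condExp_condExp_of_le (μ := μ) hmeX hmXle).symm
    have t2 : μ[μ[fun ω => Z ω * Y1 ω|mX]|me] =ᵐ[μ] μ[fun ω => e ω * (μ[Y1|mX]) ω|me] :=
      condExp_congr_ae h1
    have t3 := condExp_mul_of_stronglyMeasurable_left (m := me) (g := μ[Y1|mX]) heMe htreatint
      integrable_condExp
    have t4 : (fun ω => e ω * (μ[μ[Y1|mX]|me]) ω) =ᵐ[μ] fun ω => e ω * (μ[Y1|me]) ω := by
      filter_upwards [condExp_condExp_of_le (μ := μ) hmeX hmXle (f := Y1)] with ω hω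
      rw [hω]
    exact ((t1.trans t2).trans t3).trans t4
  have hsub : μ[fun ω => Y0 ω - Z ω * Y0 ω|mX] =ᵐ[μ] fun ω => (1 - e ω) * (μ[Y0|mX]) ω := by
    have hs := condExp_sub (m := mX) hY0int hZY0int
    refine hs.trans ?_
    filter_upwards [h0] with ω hω
    simp only [Pi.sub_apply]
    rw [hω]
    ring
  have hcontrolint : Integrable (fun ω => (1 - e ω) * (μ[Y0|mX]) ω) μ :=
    integrable_condExp.bdd_mul
      ((stronglyMeasurable_const.sub heSM).mono hmXle).aestronglyMeasurable h1ebd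
  have hcontrol : μ[fun ω => (1 - Z ω) * Y ω|me] =ᵐ[μ] fun ω => (1 - e ω) * (μ[Y0|me]) ω := by
    rw [h1ZYfun]
    have t1 : μ[fun ω => Y0 ω - Z ω * Y0 ω|me] =ᵐ[μ] μ[μ[fun ω => Y0 ω - Z ω * Y0 ω|mX]|me] :=
      (condExp_condExp_of_le (μ := μ) hmeX hmXle).symm
    have t2 : μ[μ[fun ω => Y0 ω - Z ω * Y0 ω|mX]|me]
        =ᵐ[μ] μ[fun ω => (1 - e ω) * (μ[Y0|mX]) ω|me] :=
      condExp_congr_ae hsub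
    have t3 := condExp_mul_of_stronglyMeasurable_left (m := me) (g := μ[Y0|mX])
      (stronglyMeasurable_const.sub heMe) hcontrolint integrable_condExp
    have t4 : (fun ω => (1 - e ω) * (μ[μ[Y0|mX]|me]) ω) =ᵐ[μ] fun ω => (1 - e ω) * (μ[Y0|me]) ω := by
      filter_upwards [condExp_condExp_of_le (μ := μ) hmeX hmXle (f := Y0)] with ω hω
      rw [hω]
    exact ((t1.trans t2).trans t3).trans t4
  have h1Zme : μ[fun ω => 1 - Z ω|me] =ᵐ[μ] fun ω => 1 - e ω := by
    have hs := condExp_sub (m := me) (integrable_const (1 : ℝ)) hZint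
    refine hs.trans ?_
    filter_upwards [hZme] with ω hω
    simp only [Pi.sub_apply]
    simp [condExp_const hmele, hω]
  have hfinal : (fun ω => (μ[fun ω' => Z ω' * Y ω'|me]) ω / (μ[Z|me]) ω
      - (μ[fun ω' => (1 - Z ω') * Y ω'|me]) ω / (μ[fun ω' => 1 - Z ω'|me]) ω)
      =ᵐ[μ] fun ω => (μ[Y1|me]) ω - (μ[Y0|me]) ω := by
    filter_upwards [htreat, hcontrol, hZme, h1Zme, hpos] with ω ht hc hz h1z hp
    rw [ht, hc, hz, h1z, mul_div_cancel_left₀ _ (ne_of_gt hp.1),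
      mul_div_cancel_left₀ _ (sub_ne_zero_of_ne (ne_of_gt hp.2))]
  calc (∫ ω, Y1 ω ∂μ) - ∫ ω, Y0 ω ∂μ
      = ∫ ω, ((μ[Y1|me]) ω - (μ[Y0|me]) ω) ∂μ := by
        rw [integral_sub integrable_condExp integrable_condExp,
          integral_condExp hmele, integral_condExp hmele]
    _ = _ := (integral_congr_ae hfinal).symm
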